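/- For ordinary three-heap Nim, with π(n) the number of P-positions {a,b,c} (unordered) with all entries less than n, for every positive integer n the limit as k → ∞ of π(n·2^k)/(n·2^k)² exists and is nonzero. -/

import Mathlib

open Filter

/-- A move in Nim: strictly decrease one heap. -/
def NimMove (a b : Multiset ℕ) : Prop :=
  ∃ x y, x ∈ a ∧ y < x ∧ b = y ::ₘ a.erase x

theorem NimMove.sum_lt {a b : Multiset ℕ} (h : NimMove a b) : b.sum < a.sum := by
  obtain ⟨x, y, hx, hyx, rfl⟩ := h
  have hc : x ::ₘ a.erase x = a := Multiset.cons_erase hx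
  have h1 : (y ::ₘ a.erase x).sum = y + (a.erase x).sum := Multiset.sum_cons y _
  have h2 : a.sum = x + (a.erase x).sum := by
    conv_lhs => rw [← hc]
    exact Multiset.sum_cons x _
  omega

/-- P-positions of Nim minus a forbidden finite set `F`, by the standard recursion:
a position is P iff every child not in `F` is an N-position. -/
def NimP (F : Finset (Multiset ℕ)) (a : Multiset ℕ) : Prop :=
  ∀ b, NimMove a b → b ∉ F → ¬ NimP F b
termination_by a.sum
decreasing_by exact NimMove.sum_lt (by assumption)

/-- A P-position of Nim−F : a valid position (not forbidden) which is P. -/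
def PPos (F : Finset (Multiset ℕ)) (a : Multiset ℕ) : Prop :=
  a ∉ F ∧ NimP F a

/-- Largest heap size appearing in any forbidden position. -/
def Fmax (F : Finset (Multiset ℕ)) : ℕ := F.sup Multiset.sup

/-- The set S of pairs (x,y) such that there is z with z < y < x and {x,y,z} a P-position. -/
def Sset (F : Finset (Multiset ℕ)) : Set (ℕ × ℕ) :=
  {p | ∃ z, z < p.2 ∧ p.2 < p.1 ∧ PPos F {p.1, p.2, z}}

/-- r(x,y): number of elements of S of the form (x',y) with x' ≥ x. -/
noncomputable def rdef (F : Finset (Multiset ℕ)) (x y : ℕ) : ℕ :=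
  {x' | x ≤ x' ∧ (x', y) ∈ Sset F}.ncard

/-- b(x,y): number of elements of S of the form (x,y') with y' ≤ y. -/
noncomputable def bdef (F : Finset (Multiset ℕ)) (x y : ℕ) : ℕ :=
  {y' | y' ≤ y ∧ (x, y') ∈ Sset F}.ncard

/-- U_{x,y} = A ∪ B ∪ C ∪ D. -/
def Uset (F : Finset (Multiset ℕ)) (x y : ℕ) : Set (ℕ × ℕ) :=
  {p | (p.2 < p.1 ∧ p.1 ≤ x ∧ bdef F p.1 p.1 ≥ p.1 - p.2) ∨
       (p.1 = x ∧ p.2 < y ∧ bdef F x (y - 1) ≥ y - p.2) ∨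
       (y ≤ p.2 ∧ p.2 < x ∧ x ≤ p.1 ∧ rdef F x p.2 > p.1 - x) ∨
       (p.2 < y ∧ y ≤ x ∧ x < p.1 ∧ rdef F (x + 1) p.2 > p.1 - (x + 1))}

/-- Ū_{x,y}: agrees with U_{x,y} for second coordinate < x, and for y' ≥ x contains
(x',y') iff y' < x' ≤ 2y' and (y', ⌊x'/2⌋) ∉ Ū_{x,y}. -/
def Ubar (F : Finset (Multiset ℕ)) (x y : ℕ) (p : ℕ × ℕ) : Prop :=
  if p.2 < x then p ∈ Uset F x y
  else if h : p.2 < p.1 then p.1 ≤ 2 * p.2 ∧ ¬ Ubar F x y (p.2, p.1 / 2)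
  else False
termination_by p.1
decreasing_by exact h

/-- S_n = Ū_{n,0}. -/
def Sn (F : Finset (Multiset ℕ)) (n : ℕ) : Set (ℕ × ℕ) := {p | Ubar F n 0 p}

/-- R_n = {(x,y) : y < n ≤ x ≤ 2y}. -/
def Rn (n : ℕ) : Set (ℕ × ℕ) := {p | p.2 < n ∧ n ≤ p.1 ∧ p.1 ≤ 2 * p.2}

/-- h(m,n) = |R_n ∩ S_m|. -/
noncomputable def hdef (F : Finset (Multiset ℕ)) (m n : ℕ) : ℕ := (Rn n ∩ Sn F m).ncard

/-- π(n): number of P-positions (unordered multisets) with all entries < n. -/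
noncomputable def piNim (F : Finset (Multiset ℕ)) (n : ℕ) : ℕ :=
  {s : Multiset ℕ | s.card = 3 ∧ (∀ a ∈ s, a < n) ∧ PPos F s}.ncard


/-! ### Auxiliary machinery -/

instance : Std.Commutative (fun x y : ℕ => x ^^^ y) := ⟨Nat.xor_comm⟩
instance : Std.Associative (fun x y : ℕ => x ^^^ y) := ⟨Nat.xor_assoc⟩

def nimVal (s : Multiset ℕ) : ℕ := s.fold (· ^^^ ·) 0

lemma nimVal_cons (x : ℕ) (s : Multiset ℕ) : nimVal (x ::ₘ s) = x ^^^ nimVal s :=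
  Multiset.fold_cons_left _ _ _ _

lemma nimVal_erase {x : ℕ} {s : Multiset ℕ} (h : x ∈ s) :
    nimVal s = x ^^^ nimVal (s.erase x) := by
  conv_lhs => rw [← Multiset.cons_erase h]
  exact nimVal_cons _ _

lemma exists_mem_testBit {k : ℕ} : ∀ {s : Multiset ℕ}, (nimVal s).testBit k = true →
    ∃ x ∈ s, x.testBit k = true := by
  intro s
  induction s using Multiset.induction with
  | empty => simp [nimVal]
  | cons x s ih =>
    intro h
    rw [nimVal_cons, Nat.testBit_xor] at h
    cases hx : x.testBit k with
    | true => exact ⟨x, Multiset.mem_cons_self _ _, hx⟩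
    | false =>
      have hb : (nimVal s).testBit k = true := by
        cases hb : (nimVal s).testBit k
        · rw [hx, hb] at h; simp at h
        · rfl
      obtain ⟨y, hy, hyk⟩ := ih hb
      exact ⟨y, Multiset.mem_cons_of_mem hy, hyk⟩

lemma testBit_log2 {v : ℕ} (hv : v ≠ 0) : v.testBit v.log2 = true := by
  have h1 : 2 ^ v.log2 ≤ v := Nat.log2_self_le hv
  have h2 : v < 2 ^ (v.log2 + 1) := Nat.lt_log2_self
  rw [Nat.testBit_eq_decide_div_mod_eq]
  have hp : 0 < 2 ^ v.log2 := Nat.pow_pos (by norm_num)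
  have : v / 2 ^ v.log2 = 1 := by
    have ha : v / 2 ^ v.log2 < 2 := (Nat.div_lt_iff_lt_mul hp).mpr (by rw [pow_succ] at h2; omega)
    have hb : 1 ≤ v / 2 ^ v.log2 := (Nat.le_div_iff_mul_le hp).mpr (by omega)
    omega
  simp [this]

lemma move_of_ne_zero {a : Multiset ℕ} (h : nimVal a ≠ 0) :
    ∃ b, NimMove a b ∧ nimVal b = 0 := by
  set v := nimVal a with hv
  set k := v.log2 with hk
  obtain ⟨x, hxa, hxk⟩ := exists_mem_testBit (testBit_log2 h)
  refine ⟨(x ^^^ v) ::ₘ a.erase x, ⟨x, x ^^^ v, hxa, ?_, rfl⟩, ?_⟩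
  · refine Nat.lt_of_testBit k ?_ hxk ?_
    · rw [Nat.testBit_xor, hxk, testBit_log2 h]; rfl
    · intro j hj
      rw [Nat.testBit_xor]
      have : v.testBit j = false := Nat.testBit_lt_two_pow
        (lt_of_lt_of_le Nat.lt_log2_self (Nat.pow_le_pow_right (by norm_num) hj))
      simp [this]
  · rw [nimVal_cons]
    have he : nimVal (a.erase x) = x ^^^ v := by
      rw [hv, nimVal_erase hxa, ← Nat.xor_assoc, Nat.xor_self, Nat.zero_xor]
    rw [he]; exact Nat.xor_self _

lemma move_ne_zero {a b : Multiset ℕ} (h : nimVal a = 0) (hm : NimMove a b) :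
    nimVal b ≠ 0 := by
  obtain ⟨x, y, hx, hyx, rfl⟩ := hm
  rw [nimVal_cons]
  rw [nimVal_erase hx] at h
  have hv : nimVal (a.erase x) = x := by
    have := Nat.xor_eq_zero_iff.mp h; omega
  rw [hv]
  intro hc
  have := Nat.xor_eq_zero_iff.mp hc
  omega

theorem bouton : ∀ a : Multiset ℕ, NimP ∅ a ↔ nimVal a = 0 := by
  intro a
  induction a using
    (measure fun s : Multiset ℕ => s.sum).wf.induction with
  | _ a ih =>
  constructor
  · intro hP
    by_contra h
    obtain ⟨b, hm, hb⟩ := move_of_ne_zero h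
    rw [NimP] at hP
    exact hP b hm (by simp) ((ih b (NimMove.sum_lt hm)).mpr hb)
  · intro h
    rw [NimP]
    intro b hm _ hPb
    exact move_ne_zero h hm ((ih b (NimMove.sum_lt hm)).mp hPb)

/-! ### Counting -/

lemma xor_bits (a b r s : ℕ) (hr : r < 2) (hs : s < 2) :
    (2*a+r) ^^^ (2*b+s) = 2*(a^^^b) + (r^^^s) := by
  have h00 := Nat.xor_bit false a false b
  have h01 := Nat.xor_bit false a true b
  have h10 := Nat.xor_bit true a false b
  have h11 := Nat.xor_bit true a true b
  simp [Nat.bit] at h00 h01 h10 h11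
  interval_cases r <;> interval_cases s <;> simp_all
def phi (p : ℕ × ℕ) : Multiset ℕ := {p.1, p.2, p.1 ^^^ p.2}

lemma ms_swap12 (x y z : ℕ) : ({x, y, z} : Multiset ℕ) = {y, x, z} := Multiset.cons_swap _ _ _
lemma ms_swap23 (x y z : ℕ) : ({x, y, z} : Multiset ℕ) = {x, z, y} := by
  show x ::ₘ y ::ₘ z ::ₘ 0 = x ::ₘ z ::ₘ y ::ₘ 0
  rw [Multiset.cons_swap y z]

def Dfin (N : ℕ) : Finset (ℕ × ℕ) :=
  (Finset.range N ×ˢ Finset.range N).filter fun p => p.1 ^^^ p.2 < N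

lemma mem_Dfin {N : ℕ} {p : ℕ × ℕ} :
    p ∈ Dfin N ↔ p.1 < N ∧ p.2 < N ∧ p.1 ^^^ p.2 < N := by
  simp [Dfin, Finset.mem_filter, Finset.mem_product, and_assoc]

def isDeg (p : ℕ × ℕ) : Prop := p.1 = p.2 ∨ p.1 = 0 ∨ p.2 = 0

instance : DecidablePred isDeg := fun p => by unfold isDeg; infer_instance

lemma Ddeg_card {N : ℕ} (hN : 1 ≤ N) :
    ((Dfin N).filter isDeg).card = 3 * N - 2 := by
  have he : (Dfin N).filter isDeg =
      ((Finset.range N).image fun a => (a,a)) ∪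
      (((Finset.range N).erase 0).image fun a => (a,0)) ∪
      (((Finset.range N).erase 0).image fun a => ((0:ℕ),a)) := by
    ext p
    simp only [Finset.mem_filter, Finset.mem_union, Finset.mem_image, Finset.mem_erase,
      Finset.mem_range, mem_Dfin, isDeg]
    constructor
    · rintro ⟨⟨h1, h2, h3⟩, hd⟩
      rcases hd with h | h | h
      · exact Or.inl (Or.inl ⟨p.1, h1, Prod.ext rfl h⟩)
      · by_cases h2' : p.2 = 0
        · exact Or.inl (Or.inl ⟨p.1, h1, Prod.ext rfl (by omega)⟩)
        · exact Or.inr ⟨p.2, ⟨h2', h2⟩, by rw [← h]⟩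
      · by_cases h1' : p.1 = 0
        · exact Or.inl (Or.inl ⟨p.1, h1, Prod.ext rfl (by omega)⟩)
        · exact Or.inl (Or.inr ⟨p.1, ⟨h1', h1⟩, Prod.ext rfl h.symm⟩)
    · rintro ((⟨a, ha, rfl⟩ | ⟨a, ⟨_, ha⟩, rfl⟩) | ⟨a, ⟨_, ha⟩, rfl⟩)
      · exact ⟨⟨ha, ha, by simp; omega⟩, Or.inl rfl⟩
      · exact ⟨⟨ha, by omega, by simp [ha]⟩, Or.inr (Or.inr rfl)⟩
      · exact ⟨⟨by omega, ha, by simp [ha]⟩, Or.inr (Or.inl rfl)⟩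
  rw [he]
  have hinj1 : Function.Injective (fun a : ℕ => (a,a)) := fun a b h => by
    simpa [Prod.ext_iff] using h
  have hinj2 : Function.Injective (fun a : ℕ => (a,(0:ℕ))) := fun a b h => by
    simpa [Prod.ext_iff] using h
  have hinj3 : Function.Injective (fun a : ℕ => ((0:ℕ),a)) := fun a b h => by
    simpa [Prod.ext_iff] using h
  rw [Finset.card_union_of_disjoint, Finset.card_union_of_disjoint]
  · rw [Finset.card_image_of_injective _ hinj1, Finset.card_image_of_injective _ hinj2,
      Finset.card_image_of_injective _ hinj3, Finset.card_range,
      Finset.card_erase_of_mem (by simp; omega), Finset.card_range]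
    omega
  · simp only [Finset.disjoint_left, Finset.mem_image, Finset.mem_erase, Finset.mem_range]
    rintro p ⟨a, ha, rfl⟩ ⟨b, ⟨hb0, hb⟩, h⟩
    simp [Prod.ext_iff] at h
    omega
  · simp only [Finset.disjoint_left, Finset.mem_union, Finset.mem_image, Finset.mem_erase,
      Finset.mem_range]
    rintro p (⟨a, ha, rfl⟩ | ⟨a, ⟨ha0, ha⟩, rfl⟩) ⟨b, ⟨hb0, hb⟩, h⟩ <;>
      simp [Prod.ext_iff] at h <;> omega

def Dgood (N : ℕ) : Finset (ℕ × ℕ) := (Dfin N).filter fun p => ¬ isDeg p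

lemma xor_eq_iff_right {a b : ℕ} : a ^^^ b = a ↔ b = 0 := by
  constructor
  · intro h
    have : a ^^^ (a ^^^ b) = a ^^^ a := by rw [h]
    rwa [← Nat.xor_assoc, Nat.xor_self, Nat.zero_xor] at this
  · rintro rfl; exact Nat.xor_zero a

lemma good_facts {N : ℕ} {p : ℕ × ℕ} (hp : p ∈ Dgood N) :
    p.1 ≠ p.2 ∧ p.1 ≠ 0 ∧ p.2 ≠ 0 ∧ p.1 ^^^ p.2 ≠ 0 ∧
      p.1 ^^^ p.2 ≠ p.1 ∧ p.1 ^^^ p.2 ≠ p.2 := by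
  rw [Dgood, Finset.mem_filter] at hp; simp only [isDeg] at hp
  obtain ⟨-, hd⟩ := hp
  push_neg at hd
  obtain ⟨h1, h2, h3⟩ := hd
  refine ⟨h1, h2, h3, fun h => h1 (Nat.xor_eq_zero_iff.mp h), fun h => h3 (xor_eq_iff_right.mp h),
    fun h => h2 ?_⟩
  rw [Nat.xor_comm] at h
  exact xor_eq_iff_right.mp h

lemma phi_swap (x y : ℕ) : phi (y, x) = phi (x, y) := by
  simp only [phi]
  rw [Nat.xor_comm y x]
  exact ms_swap12 _ _ _

lemma phi_ac (a b : ℕ) : phi (a, a ^^^ b) = phi (a, b) := by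
  simp only [phi]
  have : a ^^^ (a ^^^ b) = b := by rw [← Nat.xor_assoc, Nat.xor_self, Nat.zero_xor]
  rw [this]
  exact (ms_swap23 _ _ _).symm

lemma phi_bc (a b : ℕ) : phi (b, a ^^^ b) = phi (a, b) := by
  have h1 : phi (b, a ^^^ b) = phi (b, b ^^^ a) := by rw [Nat.xor_comm a b]
  rw [h1, phi_ac b a, phi_swap]

lemma fiber_card {N : ℕ} {p : ℕ × ℕ} (hp : p ∈ Dgood N) :
    ((Dgood N).filter fun q => phi q = phi p).card = 6 := by
  obtain ⟨a, b⟩ := p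
  obtain ⟨hne, ha0, hb0, hc0, hca, hcb⟩ := good_facts hp
  have hpD := (Finset.mem_filter.mp hp).1
  rw [mem_Dfin] at hpD
  obtain ⟨haN, hbN, hcN⟩ := hpD
  simp only at hne ha0 hb0 hc0 hca hcb haN hbN hcN
  set c := a ^^^ b with hC
  have hab : a ^^^ b = c := rfl
  have hba : b ^^^ a = c := by rw [Nat.xor_comm]
  have hac : a ^^^ c = b := by rw [hC, ← Nat.xor_assoc, Nat.xor_self, Nat.zero_xor]
  have hca' : c ^^^ a = b := by rw [Nat.xor_comm]; exact hac
  have hbc : b ^^^ c = a := by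
    rw [hC, Nat.xor_comm a b, ← Nat.xor_assoc, Nat.xor_self, Nat.zero_xor]
  have hcb' : c ^^^ b = a := by rw [Nat.xor_comm]; exact hbc
  have hpp : phi (a, b) = phi (a, b) := rfl
  have hS : ((Dgood N).filter fun q => phi q = phi (a, b)) =
      ({(a,b), (b,a), (a,c), (c,a), (b,c), (c,b)} : Finset (ℕ × ℕ)) := by
    ext q
    simp only [Finset.mem_filter, Finset.mem_insert, Finset.mem_singleton]
    constructor
    · rintro ⟨hq, hphi⟩
      obtain ⟨hq1, _, _, _, _, _⟩ := good_facts hq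
      have m1 : q.1 ∈ phi q := by simp [phi]
      have m2 : q.2 ∈ phi q := by simp [phi]
      rw [hphi] at m1 m2
      simp only [phi, Multiset.insert_eq_cons, Multiset.mem_cons, Multiset.mem_singleton, hab] at m1 m2
      simp only [Prod.ext_iff]
      rcases m1 with h1 | h1 | h1 <;> rcases m2 with h2 | h2 | h2 <;> omega
    · have hmem : ∀ x y : ℕ, x < N → y < N → x ^^^ y < N → x ≠ y → x ≠ 0 → y ≠ 0 →
          (x, y) ∈ Dgood N := by
        intro x y h1 h2 h3 h4 h5 h6
        rw [Dgood, Finset.mem_filter, mem_Dfin]; simp only [isDeg]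
        exact ⟨⟨h1, h2, h3⟩, by push_neg; exact ⟨h4, h5, h6⟩⟩
      rintro (rfl | rfl | rfl | rfl | rfl | rfl)
      · exact ⟨hp, rfl⟩
      · refine ⟨hmem _ _ hbN haN (by rw [hba]; exact hcN) (Ne.symm hne) hb0 ha0, ?_⟩
        rw [hpp, phi_swap]
      · refine ⟨hmem _ _ haN hcN (by rw [hac]; exact hbN) (Ne.symm hca) ha0 hc0, ?_⟩
        rw [hpp, hC, phi_ac]
      · refine ⟨hmem _ _ hcN haN (by rw [hca']; exact hbN) hca hc0 ha0, ?_⟩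
        rw [hpp, hC, ← phi_ac a b, phi_swap]
      · refine ⟨hmem _ _ hbN hcN (by rw [hbc]; exact haN) (Ne.symm hcb) hb0 hc0, ?_⟩
        rw [hpp, hC, phi_bc]
      · refine ⟨hmem _ _ hcN hbN (by rw [hcb']; exact haN) hcb hc0 hb0, ?_⟩
        rw [hpp, hC, ← phi_bc a b, phi_swap]
  rw [hS]
  have hab' : a ≠ b := hne
  have hac' : a ≠ c := Ne.symm hca
  have hbc'' : b ≠ c := Ne.symm hcb
  rw [Finset.card_insert_of_notMem (by simp [Prod.ext_iff]; omega),
    Finset.card_insert_of_notMem (by simp [Prod.ext_iff]; omega),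
    Finset.card_insert_of_notMem (by simp [Prod.ext_iff]; omega),
    Finset.card_insert_of_notMem (by simp [Prod.ext_iff]; omega),
    Finset.card_insert_of_notMem (by simp [Prod.ext_iff]; omega),
    Finset.card_singleton]

lemma Dgood_card (N : ℕ) : (Dgood N).card = 6 * ((Dgood N).image phi).card := by
  rw [Finset.card_eq_sum_card_image phi]
  rw [Finset.sum_congr rfl (g := fun _ => 6) ?_, Finset.sum_const, smul_eq_mul, mul_comm]
  intro t ht
  obtain ⟨q, hq, rfl⟩ := Finset.mem_image.mp ht
  exact fiber_card hq

def Tfin (N : ℕ) : Finset (Multiset ℕ) := (Dfin N).image phi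

lemma phi_diag (a : ℕ) : phi (a, a) = {a, a, 0} := by simp [phi]

lemma Tdeg_eq {N : ℕ} (hN : 1 ≤ N) :
    ((Dfin N).filter isDeg).image phi
      = (Finset.range N).image (fun a => ({a, a, 0} : Multiset ℕ)) := by
  ext t
  simp only [Finset.mem_image, Finset.mem_filter, Finset.mem_range]
  constructor
  · rintro ⟨p, ⟨hD, hdeg⟩, rfl⟩
    rw [mem_Dfin] at hD
    obtain ⟨a, b⟩ := p
    simp only at hD
    rcases hdeg with h | h | h
    · simp only at h; subst h
      exact ⟨a, hD.1, (phi_diag a).symm⟩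
    · simp only at h; subst h
      refine ⟨b, hD.2.1, ?_⟩
      simp only [phi, Nat.zero_xor]
      rw [ms_swap23 b b 0, ms_swap12 b 0 b]
    · simp only at h; subst h
      refine ⟨a, hD.1, ?_⟩
      simp only [phi, Nat.xor_zero]
      exact ms_swap23 a a 0
  · rintro ⟨a, ha, rfl⟩
    refine ⟨(a, a), ⟨mem_Dfin.mpr ⟨ha, ha, by simp; omega⟩, Or.inl rfl⟩, phi_diag a⟩

lemma Tdeg_card {N : ℕ} (hN : 1 ≤ N) :
    (((Dfin N).filter isDeg).image phi).card = N := by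
  rw [Tdeg_eq hN, Finset.card_image_of_injective _ ?_, Finset.card_range]
  intro x y h
  have := congrArg Multiset.sum h
  simp at this
  omega

lemma T_disj (N : ℕ) :
    Disjoint (((Dfin N).filter isDeg).image phi) ((Dgood N).image phi) := by
  rw [Finset.disjoint_left]
  rintro t ht1 ht2
  obtain ⟨q, hq, rfl⟩ := Finset.mem_image.mp ht2
  have hnd : (phi q).Nodup := by
    obtain ⟨h1, _, _, _, h5, h6⟩ := good_facts hq
    simp [phi, Multiset.nodup_cons, Multiset.mem_cons, Multiset.mem_singleton]
    exact ⟨⟨h1, fun h => (h5 h.symm).elim⟩, fun h => (h6 h.symm).elim⟩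
  rw [Tdeg_eq (by
    obtain ⟨hD, -⟩ := Finset.mem_filter.mp hq
    have := (mem_Dfin.mp hD).1
    omega)] at ht1
  obtain ⟨a, ha, he⟩ := Finset.mem_image.mp ht1
  rw [← he] at hnd
  simp [Multiset.nodup_cons] at hnd

lemma Tfin_card {N : ℕ} (hN : 1 ≤ N) :
    6 * (Tfin N).card = (Dfin N).card + 3 * N + 2 := by
  have hsplit : Tfin N = ((Dfin N).filter isDeg).image phi ∪ (Dgood N).image phi := by
    rw [Tfin, Dgood, ← Finset.image_union, Finset.filter_union_filter_not_eq]
  have hcard := Finset.card_filter_add_card_filter_not (s := Dfin N) (p := isDeg)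
  have h1 := Ddeg_card hN
  have h2 := Dgood_card N
  have hDg : Dgood N = (Dfin N).filter (fun p => ¬ isDeg p) := rfl
  rw [← hDg] at hcard
  rw [hsplit, Finset.card_union_of_disjoint (T_disj N), Tdeg_card hN]
  omega
lemma Dfin_double (N : ℕ) : (Dfin (2*N)).card = 4 * (Dfin N).card := by
  have : 4 * (Dfin N).card = ((Dfin N) ×ˢ ((Finset.range 2) ×ˢ (Finset.range 2))).card := by
    rw [Finset.card_product, Finset.card_product, Finset.card_range]; ring
  rw [this]
  apply Finset.card_nbij' (i := fun p => ((p.1/2, p.2/2), (p.1 % 2, p.2 % 2)))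
    (j := fun q => (2*q.1.1 + q.2.1, 2*q.1.2 + q.2.2))
  · intro p hp
    rw [Finset.mem_coe, mem_Dfin] at hp
    obtain ⟨h1, h2, h3⟩ := hp
    have e1 : p.1 = 2*(p.1/2) + p.1 % 2 := by omega
    have e2 : p.2 = 2*(p.2/2) + p.2 % 2 := by omega
    have hx : p.1 ^^^ p.2 = 2*((p.1/2) ^^^ (p.2/2)) + (p.1 % 2 ^^^ p.2 % 2) := by
      conv_lhs => rw [e1, e2]
      exact xor_bits _ _ _ _ (by omega) (by omega)
    have hxlt : (p.1 % 2 ^^^ p.2 % 2) < 2 := by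
      have := Nat.xor_lt_two_pow (n := 1) (by simpa using Nat.mod_lt p.1 (by norm_num : (0:ℕ) < 2)) (by simpa using Nat.mod_lt p.2 (by norm_num : (0:ℕ) < 2))
      simpa using this
    simp only [Finset.mem_coe, Finset.mem_product, mem_Dfin, Finset.mem_range]
    refine ⟨⟨by omega, by omega, by omega⟩, by omega, by omega⟩
  · intro q hq
    simp only [Finset.mem_coe, Finset.mem_product, mem_Dfin, Finset.mem_range] at hq
    obtain ⟨⟨h1, h2, h3⟩, h4, h5⟩ := hq
    rw [Finset.mem_coe, mem_Dfin]; dsimp only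
    have hx := xor_bits q.1.1 q.1.2 q.2.1 q.2.2 h4 h5
    have hxlt : (q.2.1 ^^^ q.2.2) < 2 := by
      have := Nat.xor_lt_two_pow (n := 1) (by simpa using h4) (by simpa using h5)
      simpa using this
    exact ⟨by omega, by omega, by simp only [hx]; omega⟩
  · intro p hp; ext <;> simp <;> omega
  · intro q hq
    simp only [Finset.mem_coe, Finset.mem_product, mem_Dfin, Finset.mem_range] at hq
    obtain ⟨⟨h1, h2, h3⟩, h4, h5⟩ := hq
    ext <;> simp <;> omega

lemma nimVal_triple (x y z : ℕ) : nimVal {x, y, z} = x ^^^ (y ^^^ z) := by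
  show nimVal (x ::ₘ y ::ₘ z ::ₘ 0) = _
  rw [nimVal_cons, nimVal_cons, nimVal_cons]
  simp [nimVal]

lemma piNim_set_eq (N : ℕ) :
    {s : Multiset ℕ | s.card = 3 ∧ (∀ a ∈ s, a < N) ∧ PPos ∅ s} = ↑(Tfin N) := by
  ext t
  simp only [Set.mem_setOf_eq, Finset.coe_image, Set.mem_image, Tfin, Finset.mem_coe,
    Finset.mem_image]
  constructor
  · rintro ⟨hcard, hlt, hP⟩
    obtain ⟨a, b, c, rfl⟩ := Multiset.card_eq_three.mp hcard
    have hv : nimVal {a, b, c} = 0 := (bouton _).mp hP.2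
    rw [nimVal_triple] at hv
    have hbc : b ^^^ c = a := Nat.xor_eq_zero_iff.mp hv |>.symm
    have hc : c = a ^^^ b := by
      have : b ^^^ (b ^^^ c) = b ^^^ a := by rw [hbc]
      rw [← Nat.xor_assoc, Nat.xor_self, Nat.zero_xor] at this
      rw [this, Nat.xor_comm]
    refine ⟨(a, b), mem_Dfin.mpr ⟨hlt a (by simp), hlt b (by simp), ?_⟩, ?_⟩
    · rw [← hc]; exact hlt c (by simp)
    · simp only [phi]; rw [← hc]
  · rintro ⟨p, hp, rfl⟩
    rw [mem_Dfin] at hp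
    refine ⟨by simp [phi], ?_, ?_⟩
    · intro a ha
      simp only [phi, Multiset.insert_eq_cons, Multiset.mem_cons, Multiset.mem_singleton] at ha
      rcases ha with rfl | rfl | rfl
      · exact hp.1
      · exact hp.2.1
      · exact hp.2.2
    · refine ⟨by simp, (bouton _).mpr ?_⟩
      rw [phi, nimVal_triple]
      have : p.2 ^^^ (p.1 ^^^ p.2) = p.1 := by
        rw [Nat.xor_comm p.1 p.2, ← Nat.xor_assoc, Nat.xor_self, Nat.zero_xor]
      rw [this, Nat.xor_self]

lemma piNim_eq_Tfin (N : ℕ) : piNim ∅ N = (Tfin N).card := by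
  rw [piNim, piNim_set_eq, Set.ncard_coe_finset]

lemma piNim_formula {N : ℕ} (hN : 1 ≤ N) :
    6 * piNim ∅ N = (Dfin N).card + 3 * N + 2 := by
  rw [piNim_eq_Tfin]; exact Tfin_card hN

lemma Dfin_pow (n : ℕ) : ∀ k : ℕ, (Dfin (n * 2 ^ k)).card = 4 ^ k * (Dfin n).card := by
  intro k
  induction k with
  | zero => simp
  | succ k ih =>
    have : n * 2 ^ (k + 1) = 2 * (n * 2 ^ k) := by ring
    rw [this, Dfin_double, ih, pow_succ]
    ring

lemma Dfin_pos {n : ℕ} (hn : 0 < n) : 0 < (Dfin n).card := by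
  refine Finset.card_pos.mpr ⟨(0, 0), mem_Dfin.mpr ⟨hn, hn, by simpa using hn⟩⟩

/-- Period-two scale invariance for ordinary Nim: π(n·2^k)/(n·2^k)² converges
to a nonzero constant as k → ∞. -/
theorem nim_period_two_scale_invariance (n : ℕ) (hn : 0 < n) :
    ∃ L : ℝ, L ≠ 0 ∧
      Tendsto (fun k : ℕ => (piNim ∅ (n * 2 ^ k) : ℝ) / ((n * 2 ^ k : ℕ) : ℝ) ^ 2)
        atTop (nhds L) := by
  set C : ℕ := (Dfin n).card with hC
  have hCpos : 0 < C := Dfin_pos hn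
  have hnR : (0:ℝ) < (n:ℝ) := by exact_mod_cast hn
  refine ⟨(C : ℝ) / (6 * (n:ℝ)^2), ?_, ?_⟩
  · apply div_ne_zero
    · exact_mod_cast hCpos.ne'
    · positivity
  · have hfun : (fun k : ℕ => (piNim ∅ (n * 2 ^ k) : ℝ) / ((n * 2 ^ k : ℕ) : ℝ) ^ 2)
        = fun k : ℕ => (C : ℝ) / (6 * (n:ℝ)^2) + (1/(2*(n:ℝ))) * ((1:ℝ)/2)^k
            + (1/(3*(n:ℝ)^2)) * ((1:ℝ)/4)^k := by
      funext k
      have hN : 1 ≤ n * 2 ^ k := Nat.one_le_iff_ne_zero.mpr (by positivity)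
      have h6 := piNim_formula hN
      rw [Dfin_pow n k, ← hC] at h6
      have h6R : (6:ℝ) * (piNim ∅ (n * 2 ^ k) : ℝ)
          = (4:ℝ)^k * (C:ℝ) + 3*((n:ℝ) * (2:ℝ)^k) + 2 := by exact_mod_cast h6
      have hcast : ((n * 2 ^ k : ℕ) : ℝ) = (n:ℝ) * (2:ℝ)^k := by push_cast; ring
      have h2k : (0:ℝ) < (2:ℝ)^k := by positivity
      have h4 : (4:ℝ)^k = (2:ℝ)^k * (2:ℝ)^k := by
        rw [show (4:ℝ) = 2*2 by norm_num, mul_pow]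
      have hpi : (piNim ∅ (n * 2 ^ k) : ℝ)
          = ((4:ℝ)^k * (C:ℝ) + 3*((n:ℝ) * (2:ℝ)^k) + 2)/6 := by
        rw [eq_div_iff (by norm_num : (6:ℝ) ≠ 0), mul_comm]
        exact h6R
      have e1 : ((1:ℝ)/2)^k = 1/(2:ℝ)^k := by rw [div_pow, one_pow]
      have e2 : ((1:ℝ)/4)^k = 1/((2:ℝ)^k*(2:ℝ)^k) := by rw [div_pow, one_pow, ← h4]
      rw [hpi, hcast, e1, e2, h4]
      field_simp
      ring
    rw [hfun]
    have t2 : Filter.Tendsto (fun k : ℕ => ((1:ℝ)/2)^k) atTop (nhds 0) :=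
      tendsto_pow_atTop_nhds_zero_of_lt_one (by norm_num) (by norm_num)
    have t4 : Filter.Tendsto (fun k : ℕ => ((1:ℝ)/4)^k) atTop (nhds 0) :=
      tendsto_pow_atTop_nhds_zero_of_lt_one (by norm_num) (by norm_num)
    have := ((tendsto_const_nhds
        (x := (C : ℝ) / (6 * (n:ℝ)^2)) (f := atTop (α := ℕ))).add
      (t2.const_mul (1/(2*(n:ℝ))))).add (t4.const_mul (1/(3*(n:ℝ)^2)))
    simpa using this
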